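/- Let p be an odd prime, ν ≥ 0, and a an integer with p ∤ a. Then p^(−ν) · N(a; p^ν) = 1 + (1 − 1/p) · (⌊ν/2⌋ + ⌊(ν+1)/2⌋ · (a/p)), where (a/p) is the Legendre symbol and N(a; p^ν) counts pairs (γ₁, γ₂) mod p^ν with a·γ₁² ≡ γ₂² (mod p^ν). -/

import Mathlib

open Finset


open Finset

lemma card_filter_dvd_range (n d : ℕ) (hd : d ∣ n) (hn : 0 < n) :
    ((range n).filter (fun x => d ∣ x)).card = n / d := by
  have hd0 : 0 < d := Nat.pos_of_dvd_of_pos hd hn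
  rw [← Finset.card_range (n / d)]
  apply Finset.card_bij' (fun x _ => x / d) (fun k _ => d * k)
  · intro x hx
    simp only [mem_filter, mem_range] at hx
    exact mem_range.mpr (Nat.div_lt_div_of_lt_of_dvd hd hx.1)
  · intro k hk
    simp only [mem_range] at hk
    refine mem_filter.mpr ⟨mem_range.mpr ?_, Dvd.intro k rfl⟩
    calc d * k < d * (n / d) := by gcongr
    _ = n := Nat.mul_div_cancel' hd
  · intro x hx
    simp only [mem_filter, mem_range] at hx
    exact Nat.mul_div_cancel' hx.2
  · intro k hk
    exact Nat.mul_div_cancel_left k hd0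

lemma pair_transfer {n : ℕ} [NeZero n] (Q : ZMod n × ZMod n → Prop) [DecidablePred Q]
    (R : ℕ × ℕ → Prop) [DecidablePred R]
    (hQR : ∀ t : ℕ × ℕ, t.1 < n → t.2 < n → (R t ↔ Q ((t.1 : ZMod n), (t.2 : ZMod n)))) :
    (Finset.univ.filter Q).card = ((range n ×ˢ range n).filter R).card := by
  apply Finset.card_bij' (fun z _ => ((z.1.val, z.2.val) : ℕ × ℕ))
    (fun t _ => (((t.1 : ZMod n), (t.2 : ZMod n)) : ZMod n × ZMod n))
  · intro z hz
    simp only [mem_filter, Finset.mem_univ, true_and] at hz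
    simp only [mem_filter, mem_product, mem_range]
    refine ⟨⟨ZMod.val_lt _, ZMod.val_lt _⟩, ?_⟩
    rw [hQR _ (ZMod.val_lt _) (ZMod.val_lt _)]
    simpa [ZMod.natCast_val, ZMod.cast_id] using hz
  · intro t ht
    simp only [mem_filter, mem_product, mem_range] at ht
    simp only [mem_filter, Finset.mem_univ, true_and]
    exact (hQR _ ht.1.1 ht.1.2).mp ht.2
  · intro z hz
    simp [ZMod.natCast_val, ZMod.cast_id]
  · intro t ht
    simp only [mem_filter, mem_product, mem_range] at ht
    simp [ZMod.val_cast_of_lt ht.1.1, ZMod.val_cast_of_lt ht.1.2]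
lemma count_ker (n x : ℕ) (hn : 0 < n) :
    ((range n).filter (fun y => n ∣ x * y)).card = Nat.gcd x n := by
  set g := Nat.gcd x n with hg
  have hg0 : 0 < g := Nat.gcd_pos_of_pos_right _ hn
  have hgn : g ∣ n := Nat.gcd_dvd_right _ _
  have hgx : g ∣ x := Nat.gcd_dvd_left _ _
  have hcop : (x / g).Coprime (n / g) := Nat.coprime_div_gcd_div_gcd hg0
  have key : ∀ y, n ∣ x * y ↔ (n / g) ∣ y := by
    intro y
    constructor
    · intro h
      have h2 : (n / g) ∣ (x / g) * y := by
        rcases h with ⟨c, hc⟩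
        refine ⟨c, ?_⟩
        apply Nat.eq_of_mul_eq_mul_left hg0
        rw [← Nat.mul_assoc, Nat.mul_div_cancel' hgx, ← Nat.mul_assoc, Nat.mul_div_cancel' hgn]
        exact hc
      exact (Nat.Coprime.dvd_of_dvd_mul_left (Nat.Coprime.symm hcop) h2)
    · intro h
      rcases h with ⟨c, hc⟩
      refine ⟨x / g * c, ?_⟩
      rw [hc]
      calc x * (n / g * c) = (g * (x / g)) * (n / g * c) := by rw [Nat.mul_div_cancel' hgx]
      _ = (g * (n / g)) * (x / g * c) := by ring
      _ = n * (x / g * c) := by rw [Nat.mul_div_cancel' hgn]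
  have : (range n).filter (fun y => n ∣ x * y) = (range n).filter (fun y => (n / g) ∣ y) := by
    apply Finset.filter_congr; intro y _; simpa using key y
  rw [this, card_filter_dvd_range n (n/g) (Nat.div_dvd_of_dvd hgn) hn, Nat.div_div_self hgn hn.ne']

lemma T_card (p ν : ℕ) (hp : p.Prime) (hν : 1 ≤ ν) :
    ((range (p ^ ν) ×ˢ range (p ^ ν)).filter (fun t : ℕ × ℕ => p ^ ν ∣ t.1 * t.2)).card
      = p ^ ν + ν * ((p - 1) * p ^ (ν - 1)) := by
  have hn : 0 < p ^ ν := Nat.pow_pos hp.pos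
  rw [Finset.card_filter, Finset.sum_product]
  have step1 : ∀ x : ℕ, (∑ y ∈ range (p ^ ν), if p ^ ν ∣ x * y then 1 else 0)
      = Nat.gcd x (p ^ ν) := by
    intro x
    rw [← count_ker (p ^ ν) x hn, Finset.card_filter]
  simp only [step1]
  have step2 : ∀ x : ℕ, Nat.gcd x (p ^ ν) = ∑ d ∈ (p ^ ν).divisors, if d ∣ x then d.totient else 0 := by
    intro x
    rw [← Finset.sum_filter]
    rw [← Nat.sum_totient (Nat.gcd x (p ^ ν))]
    congr 1
    ext d
    simp only [Nat.mem_divisors, Finset.mem_filter]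
    constructor
    · intro ⟨hd, h0⟩
      exact ⟨⟨(Nat.dvd_gcd_iff.mp hd).2, hn.ne'⟩, (Nat.dvd_gcd_iff.mp hd).1⟩
    · intro ⟨⟨hdn, _⟩, hdx⟩
      exact ⟨Nat.dvd_gcd hdx hdn, (Nat.gcd_pos_of_pos_right _ hn).ne'⟩
  simp only [step2]
  rw [Finset.sum_comm]
  have step3 : ∀ d ∈ (p ^ ν).divisors, (∑ x ∈ range (p ^ ν), if d ∣ x then d.totient else 0)
      = d.totient * (p ^ ν / d) := by
    intro d hd
    rw [← Finset.sum_filter, Finset.sum_const, smul_eq_mul,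
      card_filter_dvd_range _ _ (Nat.mem_divisors.mp hd).1 hn, Nat.mul_comm]
  rw [Finset.sum_congr rfl step3, Nat.sum_divisors_prime_pow hp, Finset.sum_range_succ']
  have step4 : ∀ i ∈ range ν, (p ^ (i + 1)).totient * (p ^ ν / p ^ (i + 1))
      = (p - 1) * p ^ (ν - 1) := by
    intro i hi
    have hi' : i + 1 ≤ ν := mem_range.mp hi
    rw [Nat.totient_prime_pow hp (Nat.succ_pos i), Nat.pow_div hi' hp.pos,
      Nat.mul_comm (p ^ ((i + 1) - 1)) (p - 1), Nat.mul_assoc, ← pow_add]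
    congr 2
    omega
  rw [Finset.sum_congr rfl step4, Finset.sum_const, Finset.card_range, smul_eq_mul]
  rw [pow_zero, Nat.totient_one, Nat.div_one, one_mul, Nat.add_comm]

-- square root mod p lifts to mod p^k
lemma sq_lift (p : ℕ) (hp : p.Prime) (hodd : Odd p) (a : ℤ) (ha : ¬(p : ℤ) ∣ a)
    (hsq : ∃ b : ℤ, (p : ℤ) ∣ a - b ^ 2) :
    ∀ k : ℕ, ∃ b : ℤ, (p : ℤ) ^ k ∣ a - b ^ 2 := by
  haveI : Fact p.Prime := ⟨hp⟩
  intro k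
  induction k with
  | zero => exact ⟨0, by simp⟩
  | succ k IH =>
    rcases Nat.eq_zero_or_pos k with hk0 | hk0
    · subst hk0; simpa using hsq
    obtain ⟨j, rfl⟩ : ∃ j, k = j + 1 := ⟨k - 1, by omega⟩
    obtain ⟨b, m, hm⟩ := IH
    have hpb : ¬ (p : ℤ) ∣ b := by
      intro hdvd
      apply ha
      have h1 : (p : ℤ) ∣ a - b ^ 2 := dvd_trans (dvd_pow_self _ (by omega)) ⟨m, hm⟩
      have h2 : (p : ℤ) ∣ b ^ 2 := Dvd.dvd.pow hdvd (by omega)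
      have := dvd_add h1 h2
      simpa using this
    -- choose c with p ∣ 2*b*c - 1
    have h2b : (2 : ZMod p) * (b : ZMod p) ≠ 0 := by
      intro h0
      have : ((2 * b : ℤ) : ZMod p) = 0 := by push_cast; exact h0
      have hdvd := (ZMod.intCast_zmod_eq_zero_iff_dvd _ _).mp this
      rcases (Int.Prime.dvd_mul' hp hdvd) with h | h
      · have hpdvd2 : p ∣ 2 := by exact_mod_cast h
        have hp2 : p = 2 := (Nat.prime_dvd_prime_iff_eq hp Nat.prime_two).mp hpdvd2
        rw [Nat.odd_iff] at hodd
        omega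
      · exact hpb h
    obtain ⟨c, t, ht⟩ : ∃ c t : ℤ, 2 * b * c - 1 = (p : ℤ) * t := by
      refine ⟨(((2 : ZMod p) * (b : ZMod p))⁻¹).val, ?_⟩
      have : ((2 * b * ((((2 : ZMod p) * (b : ZMod p)))⁻¹).val - 1 : ℤ) : ZMod p) = 0 := by
        push_cast
        rw [ZMod.natCast_val, ZMod.cast_id, mul_inv_cancel₀ h2b]
        ring
      rcases (ZMod.intCast_zmod_eq_zero_iff_dvd _ _).mp this with ⟨t, ht⟩
      exact ⟨t, ht⟩
    refine ⟨b + m * c * (p : ℤ) ^ (j + 1), -(m * t) - m ^ 2 * c ^ 2 * (p : ℤ) ^ j, ?_⟩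
    have expand : a - (b + m * c * (p : ℤ) ^ (j + 1)) ^ 2
        = (p : ℤ) ^ (j + 1 + 1) * (-(m * t) - m ^ 2 * c ^ 2 * (p : ℤ) ^ j) := by
      linear_combination hm - ((p : ℤ) ^ (j + 1) * m) * ht
    exact expand

-- one step descent for nonresidues
lemma one_step (p : ℕ) (hp : p.Prime) (hodd : Odd p) (a : ℤ) (ha : ¬(p : ℤ) ∣ a)
    (hleg : @legendreSym p ⟨hp⟩ a = -1) (x y : ℤ) (h : (p : ℤ) ∣ a * x ^ 2 - y ^ 2) :
    (p : ℤ) ∣ x ∧ (p : ℤ) ∣ y := by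
  haveI : Fact p.Prime := ⟨hp⟩
  have ha0 : (a : ZMod p) ≠ 0 := by
    rw [Ne, ZMod.intCast_zmod_eq_zero_iff_dvd]; exact ha
  have hz : (a : ZMod p) * (x : ZMod p) ^ 2 = (y : ZMod p) ^ 2 := by
    have := (ZMod.intCast_zmod_eq_zero_iff_dvd _ p).mpr h
    push_cast at this
    linear_combination this
  have hx : (x : ZMod p) = 0 := by
    by_contra hx0
    have hsq : IsSquare (a : ZMod p) := by
      refine ⟨(y : ZMod p) * ((x : ZMod p))⁻¹, ?_⟩
      field_simp
      linear_combination hz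
    rw [← legendreSym.eq_one_iff p ha0] at hsq
    omega
  have hy : (y : ZMod p) = 0 := by
    have : ((y : ZMod p)) ^ 2 = 0 := by rw [← hz, hx]; ring
    exact pow_eq_zero_iff (by norm_num) |>.mp this
  exact ⟨(ZMod.intCast_zmod_eq_zero_iff_dvd _ _).mp hx,
    (ZMod.intCast_zmod_eq_zero_iff_dvd _ _).mp hy⟩

-- valuation lemma for nonresidues
lemma nonres_val (p : ℕ) (hp : p.Prime) (hodd : Odd p) (a : ℤ) (ha : ¬(p : ℤ) ∣ a)
    (hleg : @legendreSym p ⟨hp⟩ a = -1) :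
    ∀ ν : ℕ, ∀ x y : ℤ, (p : ℤ) ^ ν ∣ a * x ^ 2 - y ^ 2 →
      (p : ℤ) ^ ((ν + 1) / 2) ∣ x ∧ (p : ℤ) ^ ((ν + 1) / 2) ∣ y := by
  intro ν
  induction ν using Nat.twoStepInduction with
  | zero => intro x y _; simp
  | one =>
    intro x y h
    simpa using one_step p hp hodd a ha hleg x y (by simpa using h)
  | more ν IH _ =>
    intro x y h
    have hp1 : (p : ℤ) ∣ a * x ^ 2 - y ^ 2 :=
      dvd_trans (dvd_pow_self _ (Nat.succ_ne_zero _)) h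
    obtain ⟨hx, hy⟩ := one_step p hp hodd a ha hleg x y hp1
    obtain ⟨x₁, rfl⟩ := hx
    obtain ⟨y₁, rfl⟩ := hy
    have h2 : (p : ℤ) ^ ν ∣ a * x₁ ^ 2 - y₁ ^ 2 := by
      have hpne : (p : ℤ) ^ 2 ≠ 0 := pow_ne_zero _ (by exact_mod_cast hp.pos.ne')
      have : (p : ℤ) ^ (ν + 2) = (p : ℤ) ^ 2 * (p : ℤ) ^ ν := by ring
      rw [this] at h
      rcases h with ⟨w, hw⟩
      refine ⟨w, ?_⟩
      have : (p : ℤ) ^ 2 * (a * x₁ ^ 2 - y₁ ^ 2) = (p : ℤ) ^ 2 * ((p : ℤ) ^ ν * w) := by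
        linear_combination hw
      exact mul_left_cancel₀ hpne this
    obtain ⟨hx1, hy1⟩ := IH x₁ y₁ h2
    have hexp : (ν + 2 + 1) / 2 = (ν + 1) / 2 + 1 := by omega
    rw [hexp]
    exact ⟨by rw [pow_succ, mul_comm ((p:ℤ)^((ν+1)/2)) _]; exact mul_dvd_mul_left _ hx1,
      by rw [pow_succ, mul_comm ((p:ℤ)^((ν+1)/2)) _]; exact mul_dvd_mul_left _ hy1⟩


-- zmod-level bijection step for the residue case
lemma step_sq (n : ℕ) [NeZero n] (A : ZMod n) (b : (ZMod n)ˣ) (hb : (b : ZMod n) ^ 2 = A)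
    (hc2 : ∃ c : ZMod n, (2 : ZMod n) * c = 1) :
    (Finset.univ.filter (fun z : ZMod n × ZMod n => A * z.1 ^ 2 = z.2 ^ 2)).card
      = (Finset.univ.filter (fun z : ZMod n × ZMod n => z.1 * z.2 = 0)).card := by
  -- first: A * u^2 = v^2  ≃  s^2 = v^2 via u ↦ b * u
  have h1 : (Finset.univ.filter (fun z : ZMod n × ZMod n => A * z.1 ^ 2 = z.2 ^ 2)).card
      = (Finset.univ.filter (fun z : ZMod n × ZMod n => z.1 ^ 2 = z.2 ^ 2)).card := by
    apply Finset.card_bij' (fun z _ => (((b : ZMod n) * z.1, z.2) : ZMod n × ZMod n))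
      (fun z _ => ((((b⁻¹ : (ZMod n)ˣ) : ZMod n) * z.1, z.2) : ZMod n × ZMod n))
    · intro z hz
      simp only [mem_filter, Finset.mem_univ, true_and] at hz ⊢
      rw [mul_pow, hb, hz]
    · intro z hz
      simp only [mem_filter, Finset.mem_univ, true_and] at hz ⊢
      have : ((b⁻¹ : (ZMod n)ˣ) : ZMod n) ^ 2 * A = 1 := by
        rw [← hb, ← mul_pow, Units.inv_mul, one_pow]
      calc A * (((b⁻¹ : (ZMod n)ˣ) : ZMod n) * z.1) ^ 2
          = (((b⁻¹ : (ZMod n)ˣ) : ZMod n) ^ 2 * A) * z.1 ^ 2 := by ring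
        _ = z.1 ^ 2 := by rw [this, one_mul]
        _ = z.2 ^ 2 := hz
    · intro z _
      simp [← mul_assoc, Units.inv_mul]
    · intro z _
      simp [← mul_assoc, Units.mul_inv]
  -- second: s^2 = v^2 ≃ x * y = 0 via (s,v) ↦ (s+v, s-v)
  obtain ⟨c, hc⟩ := hc2
  have h2 : (Finset.univ.filter (fun z : ZMod n × ZMod n => z.1 ^ 2 = z.2 ^ 2)).card
      = (Finset.univ.filter (fun z : ZMod n × ZMod n => z.1 * z.2 = 0)).card := by
    apply Finset.card_bij' (fun z _ => ((z.1 + z.2, z.1 - z.2) : ZMod n × ZMod n))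
      (fun z _ => ((c * (z.1 + z.2), c * (z.1 - z.2)) : ZMod n × ZMod n))
    · intro z hz
      simp only [mem_filter, Finset.mem_univ, true_and] at hz ⊢
      linear_combination hz
    · intro z hz
      simp only [mem_filter, Finset.mem_univ, true_and] at hz ⊢
      linear_combination (4 * c ^ 2) * hz
    · intro z _
      have e1 : c * (z.1 + z.2 + (z.1 - z.2)) = z.1 := by
        calc c * (z.1 + z.2 + (z.1 - z.2)) = (2 * c) * z.1 := by ring
        _ = z.1 := by rw [hc, one_mul]
      have e2 : c * (z.1 + z.2 - (z.1 - z.2)) = z.2 := by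
        calc c * (z.1 + z.2 - (z.1 - z.2)) = (2 * c) * z.2 := by ring
        _ = z.2 := by rw [hc, one_mul]
      exact Prod.ext e1 e2
    · intro z _
      have e1 : c * (z.1 + z.2) + c * (z.1 - z.2) = z.1 := by
        calc c * (z.1 + z.2) + c * (z.1 - z.2) = (2 * c) * z.1 := by ring
        _ = z.1 := by rw [hc, one_mul]
      have e2 : c * (z.1 + z.2) - c * (z.1 - z.2) = z.2 := by
        calc c * (z.1 + z.2) - c * (z.1 - z.2) = (2 * c) * z.2 := by ring
        _ = z.2 := by rw [hc, one_mul]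
      exact Prod.ext e1 e2
  rw [h1, h2]

/-- For `p` an odd prime, `p ∤ a`, `ν ≥ 0`:
`p^{-ν} N(a; p^ν) = 1 + (1 - 1/p)(⌊ν/2⌋ + ⌊(ν+1)/2⌋ (a/p))`. -/
theorem stmt8 (p : ℕ) (hp : p.Prime) (hodd : Odd p) (ν : ℕ) (a : ℤ)
    (ha : ¬ (p : ℤ) ∣ a) :
    (((Finset.range (p ^ ν) ×ˢ Finset.range (p ^ ν)).filter
        (fun t : ℕ × ℕ =>
          (a * (t.1 : ℤ) ^ 2) % ((p : ℤ) ^ ν) = ((t.2 : ℤ) ^ 2) % ((p : ℤ) ^ ν))).card : ℚ)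
      = (p : ℚ) ^ ν *
          (1 + (1 - 1 / (p : ℚ)) *
            (((ν / 2 : ℕ) : ℚ) + (((ν + 1) / 2 : ℕ) : ℚ) * ((@legendreSym p ⟨hp⟩ a : ℤ) : ℚ))) := by
  haveI : Fact p.Prime := ⟨hp⟩
  have hp0 : (0 : ℚ) < (p : ℚ) := by exact_mod_cast hp.pos
  rcases Nat.eq_zero_or_pos ν with hν0 | hν
  · subst hν0
    norm_num
  -- ν ≥ 1 from here on
  have hn : 0 < p ^ ν := Nat.pow_pos hp.pos
  haveI : NeZero (p ^ ν) := ⟨hn.ne'⟩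
  have hcast : ((p : ℤ) ^ ν) = ((p ^ ν : ℕ) : ℤ) := by push_cast; ring
  have ha0 : (a : ZMod p) ≠ 0 := by
    rw [Ne, ZMod.intCast_zmod_eq_zero_iff_dvd]; exact ha
  rcases legendreSym.eq_one_or_neg_one p ha0 with hleg | hleg
  · -- residue case
    rw [hleg]
    -- find square root of a mod p^ν
    have hsq1 : ∃ b : ℤ, (p : ℤ) ∣ a - b ^ 2 := by
      obtain ⟨r, hr⟩ := (legendreSym.eq_one_iff p ha0).mp hleg
      refine ⟨(r.val : ℤ), ?_⟩
      rw [← ZMod.intCast_zmod_eq_zero_iff_dvd]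
      push_cast
      rw [ZMod.natCast_val, ZMod.cast_id, hr]
      ring
    obtain ⟨b, hb⟩ := sq_lift p hp hodd a ha hsq1 ν
    have hbz : ((b : ZMod (p ^ ν))) ^ 2 = (a : ZMod (p ^ ν)) := by
      have : ((a - b ^ 2 : ℤ) : ZMod (p ^ ν)) = 0 := by
        rw [ZMod.intCast_zmod_eq_zero_iff_dvd, ← hcast]
        exact hb
      push_cast at this
      linear_combination -this
    have hbu : IsUnit ((b : ZMod (p ^ ν))) := by
      have hau : IsUnit ((a : ZMod (p ^ ν))) := by
        have hcop : IsCoprime ((p : ℤ) ^ ν) a :=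
          IsCoprime.pow_left (((Nat.prime_iff_prime_int.mp hp).coprime_iff_not_dvd).mpr ha)
        obtain ⟨u, v, huv⟩ := hcop
        have h0 : ((p : ZMod (p ^ ν))) ^ ν = 0 := by
          have := ZMod.natCast_self (p ^ ν)
          push_cast at this
          exact this
        have h1 : ((u * (p : ℤ) ^ ν + v * a : ℤ) : ZMod (p ^ ν)) = 1 := by rw [huv]; push_cast; ring
        push_cast at h1
        rw [h0] at h1
        refine IsUnit.of_mul_eq_one ((v : ZMod (p ^ ν))) ?_
        rw [mul_comm]
        linear_combination h1
      rw [← hbz] at hau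
      rw [sq] at hau
      exact isUnit_of_mul_isUnit_left hau
    -- transfer to ZMod, apply step_sq, transfer back
    have tr1 := pair_transfer (n := p ^ ν)
      (fun z : ZMod (p ^ ν) × ZMod (p ^ ν) => (a : ZMod (p ^ ν)) * z.1 ^ 2 = z.2 ^ 2)
      (fun t : ℕ × ℕ => (a * (t.1 : ℤ) ^ 2) % ((p : ℤ) ^ ν) = ((t.2 : ℤ) ^ 2) % ((p : ℤ) ^ ν))
      (by
        intro t _ _
        rw [hcast]
        constructor
        · intro h
          have h2 := (ZMod.intCast_eq_intCast_iff _ _ _).mpr h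
          push_cast at h2
          exact h2
        · intro h
          refine (ZMod.intCast_eq_intCast_iff _ _ _).mp ?_
          push_cast
          exact h)
    have tr2 := pair_transfer (n := p ^ ν)
      (fun z : ZMod (p ^ ν) × ZMod (p ^ ν) => z.1 * z.2 = 0)
      (fun t : ℕ × ℕ => p ^ ν ∣ t.1 * t.2)
      (by
        intro t _ _
        show p ^ ν ∣ t.1 * t.2 ↔ ((t.1 : ZMod (p ^ ν)) * (t.2 : ZMod (p ^ ν)) = 0)
        rw [← ZMod.natCast_eq_zero_iff, Nat.cast_mul])
    have hc2 : ∃ c : ZMod (p ^ ν), (2 : ZMod (p ^ ν)) * c = 1 := by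
      have hc : Nat.Coprime 2 (p ^ ν) :=
        Nat.Coprime.pow_right ν ((Nat.coprime_primes Nat.prime_two hp).mpr
          (by rw [Nat.odd_iff] at hodd; omega))
      have hu : IsUnit ((2 : ℕ) : ZMod (p ^ ν)) := (ZMod.isUnit_iff_coprime 2 (p ^ ν)).mpr hc
      obtain ⟨c, hc'⟩ := hu.exists_right_inv
      exact ⟨c, by exact_mod_cast hc'⟩
    rw [← tr1, step_sq (p ^ ν) _ hbu.unit (by rw [IsUnit.unit_spec]; exact hbz) hc2, tr2,
      T_card p ν hp hν]
    -- final arithmetic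
    have hsum : ((ν / 2 : ℕ) : ℚ) + (((ν + 1) / 2 : ℕ) : ℚ) = (ν : ℚ) := by
      have : (ν / 2 : ℕ) + ((ν + 1) / 2 : ℕ) = ν := by omega
      exact_mod_cast congrArg (fun k : ℕ => (k : ℚ)) this
    have hps : ((p - 1 : ℕ) : ℚ) = (p : ℚ) - 1 := by
      have := hp.one_le; push_cast [Nat.cast_sub this]; ring
    have hpν : ((p : ℚ)) ^ ν = (p : ℚ) ^ (ν - 1) * p := by
      rw [← pow_succ]; congr 1; omega
    push_cast [hps]
    rw [mul_one, hsum, hpν]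
    field_simp
  · -- nonresidue case
    rw [hleg]
    set m := (ν + 1) / 2 with hm
    have hmν : m ≤ ν := by omega
    have h2m : ν ≤ 2 * m := by omega
    have hfc : ∀ t : ℕ × ℕ,
        ((a * (t.1 : ℤ) ^ 2) % ((p : ℤ) ^ ν) = ((t.2 : ℤ) ^ 2) % ((p : ℤ) ^ ν))
          ↔ (p ^ m ∣ t.1 ∧ p ^ m ∣ t.2) := by
      intro t
      constructor
      · intro h
        have hdvd : (p : ℤ) ^ ν ∣ a * (t.1 : ℤ) ^ 2 - (t.2 : ℤ) ^ 2 := by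
          exact Int.ModEq.dvd (Int.ModEq.symm h)
        obtain ⟨h1, h2⟩ := nonres_val p hp hodd a ha hleg ν _ _ hdvd
        constructor
        · exact Int.natCast_dvd_natCast.mp (by push_cast; exact h1)
        · exact Int.natCast_dvd_natCast.mp (by push_cast; exact h2)
      · rintro ⟨⟨x', hx'⟩, ⟨y', hy'⟩⟩
        have : (p : ℤ) ^ ν ∣ a * (t.1 : ℤ) ^ 2 - (t.2 : ℤ) ^ 2 := by
          obtain ⟨k, hk⟩ : ∃ k, 2 * m = ν + k := ⟨2 * m - ν, by omega⟩
          refine ⟨(p : ℤ) ^ k * (a * (x' : ℤ) ^ 2 - (y' : ℤ) ^ 2), ?_⟩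
          have e1 : ((t.1 : ℕ) : ℤ) = (p : ℤ) ^ m * (x' : ℤ) := by exact_mod_cast congrArg (fun u : ℕ => (u : ℤ)) hx'
          have e2 : ((t.2 : ℕ) : ℤ) = (p : ℤ) ^ m * (y' : ℤ) := by exact_mod_cast congrArg (fun u : ℕ => (u : ℤ)) hy'
          rw [e1, e2]
          have : (p : ℤ) ^ ν * ((p : ℤ) ^ k) = (p : ℤ) ^ (2 * m) := by
            rw [← pow_add, ← hk]
          calc a * ((p : ℤ) ^ m * (x' : ℤ)) ^ 2 - ((p : ℤ) ^ m * (y' : ℤ)) ^ 2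
              = (p : ℤ) ^ (2 * m) * (a * (x' : ℤ) ^ 2 - (y' : ℤ) ^ 2) := by ring
            _ = (p : ℤ) ^ ν * ((p : ℤ) ^ k * (a * (x' : ℤ) ^ 2 - (y' : ℤ) ^ 2)) := by
                rw [← this]; ring
        show Int.ModEq ((p : ℤ) ^ ν) (a * (t.1 : ℤ) ^ 2) ((t.2 : ℤ) ^ 2)
        refine Int.modEq_iff_dvd.mpr ?_
        have hneg : (t.2 : ℤ) ^ 2 - a * (t.1 : ℤ) ^ 2 = -(a * (t.1 : ℤ) ^ 2 - (t.2 : ℤ) ^ 2) := by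
          ring
        rw [hneg]
        exact dvd_neg.mpr this
    rw [Finset.filter_congr (fun t _ => by rw [hfc t])]
    rw [Finset.filter_product (fun x => p ^ m ∣ x) (fun y => p ^ m ∣ y), Finset.card_product,
      card_filter_dvd_range _ _ (pow_dvd_pow p hmν) hn, Nat.pow_div hmν hp.pos]
    -- final arithmetic
    have hν2 : ν - m = ν / 2 := by omega
    rw [hν2]
    rcases Nat.even_or_odd ν with ⟨k, hk⟩ | ⟨k, hk⟩
    · have e1 : ν / 2 = k := by omega
      have e2 : (ν + 1) / 2 = k := by omega
      rw [e1, (show m = k by omega), hk]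
      push_cast
      ring
    · have e1 : ν / 2 = k := by omega
      have e2 : (ν + 1) / 2 = k + 1 := by omega
      rw [e1, (show m = k + 1 by omega), hk]
      have hpne : (p : ℚ) ≠ 0 := ne_of_gt hp0
      push_cast
      field_simp
      ring
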